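/- The Hardy–Littlewood prime-pair constants have mean value one: (1/m) · ∑_{r=1}^{m} C_{2r} → 1 as m → ∞; equivalently, ∑_{1 ≤ r ≤ m} C_{2r} ∼ m. -/

import Mathlib

open Filter Topology Finset

/-- The twin prime constant `C₂ = ∏_{p > 2 prime} (1 - 1/(p-1)²)`. -/
noncomputable def twinPrimeConst : ℝ :=
  ∏' p : {p : ℕ // p.Prime ∧ 2 < p}, (1 - 1 / ((p : ℕ) - 1 : ℝ) ^ 2)

/-- The Hardy–Littlewood constant `C_{2r} = C₂ ∏_{p ∣ r, p > 2} (p-1)/(p-2)`. -/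
noncomputable def HLconst (r : ℕ) : ℝ :=
  twinPrimeConst *
    ∏ p ∈ r.primeFactors.filter (fun p => 2 < p), (((p : ℝ) - 1) / ((p : ℝ) - 2))

namespace HLaux

open Classical in
/-- The multiplicative weight `w d = ∏_{p ∣ d} 1/(p-2)` for `d` odd squarefree, `0` otherwise. -/
noncomputable def w (d : ℕ) : ℝ :=
  if Squarefree d ∧ Odd d then ∏ p ∈ d.primeFactors, (1 : ℝ) / ((p : ℝ) - 2) else 0

noncomputable def G (d : ℕ) : ℝ := w d / d

lemma w_zero : w 0 = 0 := by simp [w, not_squarefree_zero]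

lemma w_one : w 1 = 1 := by simp [w, squarefree_one]

lemma three_le_of_mem {d p : ℕ} (hd : Odd d) (hp : p ∈ d.primeFactors) : 3 ≤ p := by
  have hprime := Nat.prime_of_mem_primeFactors hp
  have hdvd := Nat.dvd_of_mem_primeFactors hp
  by_contra h
  have hp2 : p = 2 := by have := hprime.two_le; omega
  subst hp2
  rw [Nat.odd_iff] at hd
  have h0 : d % 2 = 0 := Nat.mod_eq_zero_of_dvd hdvd
  omega

lemma w_nonneg (d : ℕ) : 0 ≤ w d := by
  unfold w
  split_ifs with h
  · refine Finset.prod_nonneg fun p hp => ?_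
    have h3 : 3 ≤ p := three_le_of_mem h.2 hp
    have h3' : (3:ℝ) ≤ (p:ℝ) := by exact_mod_cast h3
    have : (0:ℝ) ≤ (p:ℝ) - 2 := by linarith
    exact div_nonneg one_pos.le this
  · exact le_refl _

lemma G_nonneg (d : ℕ) : 0 ≤ G d := div_nonneg (w_nonneg d) (Nat.cast_nonneg d)

lemma w_prime {p : ℕ} (hp : p.Prime) (h2 : 2 < p) : w p = 1 / ((p : ℝ) - 2) := by
  have hodd : Odd p := hp.odd_of_ne_two (by omega)
  rw [w, if_pos ⟨hp.squarefree, hodd⟩, hp.primeFactors, Finset.prod_singleton]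

lemma w_two_pow {e : ℕ} (he : 1 ≤ e) : w (2 ^ e) = 0 := by
  rw [w, if_neg]
  rintro ⟨-, hodd⟩
  rw [Nat.odd_iff] at hodd
  have : 2 ∣ 2 ^ e := dvd_pow_self 2 (by omega)
  have := Nat.mod_eq_zero_of_dvd this
  omega

lemma w_not_squarefree {d : ℕ} (hd : ¬Squarefree d) : w d = 0 := by
  rw [w, if_neg]; tauto

lemma G_zero : G 0 = 0 := by simp [G, w_zero]

lemma G_one : G 1 = 1 := by simp [G, w_one]

lemma cond_mul_iff {m n : ℕ} (hc : m.Coprime n) :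
    (Squarefree (m * n) ∧ Odd (m * n)) ↔ (Squarefree m ∧ Odd m) ∧ (Squarefree n ∧ Odd n) := by
  rw [Nat.squarefree_mul hc, Nat.odd_mul]
  tauto

lemma w_mul {m n : ℕ} (hc : m.Coprime n) (hm : m ≠ 0) (hn : n ≠ 0) :
    w (m * n) = w m * w n := by
  classical
  by_cases h : (Squarefree m ∧ Odd m) ∧ (Squarefree n ∧ Odd n)
  · rw [w, if_pos ((cond_mul_iff hc).mpr h), w, if_pos h.1, w, if_pos h.2,
      Nat.primeFactors_mul hm hn, Finset.prod_union hc.disjoint_primeFactors]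
  · have hmn : ¬(Squarefree (m * n) ∧ Odd (m * n)) := fun hx => h ((cond_mul_iff hc).mp hx)
    rw [w, if_neg hmn]
    rcases not_and_or.mp h with h' | h'
    · rw [w, if_neg h', zero_mul]
    · rw [show w n = 0 from by rw [w, if_neg h'], mul_zero]

lemma G_mul {m n : ℕ} (hc : m.Coprime n) : G (m * n) = G m * G n := by
  rcases Nat.eq_zero_or_pos m with rfl | hm
  · simp [G, w_zero]
  rcases Nat.eq_zero_or_pos n with rfl | hn
  · simp [G, w_zero]
  rw [G, G, G, w_mul hc hm.ne' hn.ne', Nat.cast_mul]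
  rw [div_mul_div_comm]

lemma w_pow_eq_zero {p e : ℕ} (hp : p.Prime) (he : 2 ≤ e) : w (p ^ e) = 0 := by
  apply w_not_squarefree
  intro hsf
  have : p * p ∣ p ^ e := by
    have : p ^ 2 ∣ p ^ e := pow_dvd_pow p he
    simpa [sq] using this
  exact hp.not_isUnit (hsf p this)

lemma tsum_G_pow {p : ℕ} (hp : p.Prime) : ∑' e : ℕ, G (p ^ e) = 1 + G p := by
  classical
  rw [tsum_eq_sum (s := ({0, 1} : Finset ℕ)) ?h]
  · simp [G_one]
  case h =>
    intro e he
    have h2 : 2 ≤ e := by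
      simp only [Finset.mem_insert, Finset.mem_singleton] at he
      omega
    simp [G, w_pow_eq_zero hp h2]

lemma G_eq_prod {d : ℕ} (h : Squarefree d ∧ Odd d) :
    G d = ∏ p ∈ d.primeFactors, (1 / (((p : ℝ) - 2) * p)) := by
  have hd : (d : ℝ) = ∏ p ∈ d.primeFactors, (p : ℝ) := by
    rw [← Nat.cast_prod]
    exact_mod_cast (Nat.prod_primeFactors_of_squarefree h.1).symm
  rw [G, w, if_pos h, hd, ← Finset.prod_div_distrib]
  exact Finset.prod_congr rfl fun p _ => by rw [div_div]

lemma five_le {p : ℕ} (hp : p.Prime) (h3 : p ≠ 3) (h2 : 2 < p) : 5 ≤ p := by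
  by_contra h
  interval_cases p
  · exact h3 rfl
  · exact absurd hp (by decide)

lemma rpow_neg_threehalf {x : ℝ} (hx0 : 0 < x) :
    x ^ (-(3/2) : ℝ) = 1 / (x * Real.sqrt x) := by
  rw [Real.rpow_neg hx0.le, show (3/2 : ℝ) = 1 + 1/2 by norm_num,
    Real.rpow_add hx0, Real.rpow_one, ← Real.sqrt_eq_rpow, one_div]

lemma ptwise {p : ℕ} (h5 : 5 ≤ p) :
    (1 : ℝ) / (((p : ℝ) - 2) * p) ≤ (p : ℝ) ^ (-(3/2) : ℝ) := by
  have hx : (5 : ℝ) ≤ (p : ℝ) := by exact_mod_cast h5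
  set x : ℝ := (p : ℝ) with hxdef
  have hx0 : 0 < x := by linarith
  rw [rpow_neg_threehalf hx0]
  have hs0 : 0 ≤ Real.sqrt x := Real.sqrt_nonneg x
  have hsle : Real.sqrt x ≤ x - 2 := by
    have h1 : x ≤ (x - 2) ^ 2 := by nlinarith
    calc Real.sqrt x ≤ Real.sqrt ((x - 2) ^ 2) := Real.sqrt_le_sqrt h1
      _ = x - 2 := Real.sqrt_sq (by linarith)
  apply one_div_le_one_div_of_le
  · positivity
  · calc x * Real.sqrt x ≤ x * (x - 2) := by nlinarith
      _ = (x - 2) * x := by ring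

lemma prod_bound (F : Finset ℕ) (hF : ∀ p ∈ F, p.Prime ∧ 3 ≤ p) :
    ∏ p ∈ F, (1 / (((p : ℝ) - 2) * p)) ≤ 2 * ∏ p ∈ F, ((p : ℝ)) ^ (-(3/2) : ℝ) := by
  classical
  have hfnonneg : ∀ p ∈ F, (0:ℝ) ≤ 1 / (((p : ℝ) - 2) * p) := by
    intro p hp
    have h3 : (3:ℝ) ≤ (p:ℝ) := by exact_mod_cast (hF p hp).2
    have : (0:ℝ) < ((p : ℝ) - 2) * p := by nlinarith
    exact le_of_lt (div_pos one_pos this)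
  by_cases h3 : 3 ∈ F
  · rw [← Finset.mul_prod_erase F _ h3, ← Finset.mul_prod_erase F _ h3]
    have herase : ∏ p ∈ F.erase 3, (1 / (((p : ℝ) - 2) * p)) ≤
        ∏ p ∈ F.erase 3, ((p : ℝ)) ^ (-(3/2) : ℝ) := by
      apply Finset.prod_le_prod
      · intro p hp; exact hfnonneg p (Finset.mem_of_mem_erase hp)
      · intro p hp
        have hq := hF p (Finset.mem_of_mem_erase hp)
        exact ptwise (five_le hq.1 (Finset.ne_of_mem_erase hp) (by omega))
    have hs4 : Real.sqrt 4 = 2 := by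
      rw [show (4:ℝ) = 2^2 by norm_num]
      exact Real.sqrt_sq (by norm_num)
    have hs : Real.sqrt 3 ≤ 2 := by
      rw [← hs4]; exact Real.sqrt_le_sqrt (by norm_num)
    have hs0 : 0 ≤ Real.sqrt 3 := Real.sqrt_nonneg 3
    have hs3 : Real.sqrt 3 * Real.sqrt 3 = 3 := Real.mul_self_sqrt (by norm_num)
    have hspos : 0 < Real.sqrt 3 := by nlinarith
    have h13 : (1 : ℝ) / ((((3:ℕ) : ℝ) - 2) * ((3:ℕ):ℝ)) ≤ 2 * (((3:ℕ):ℝ)) ^ (-(3/2) : ℝ) := by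
      rw [show (((3:ℕ):ℝ)) = (3:ℝ) by norm_num, rpow_neg_threehalf (by norm_num)]
      rw [show ((3:ℝ) - 2) * 3 = 3 by norm_num]
      rw [div_le_iff₀ (by norm_num)]
      rw [mul_comm 2 _, mul_assoc, one_div, inv_mul_eq_div, le_div_iff₀ (by positivity)]
      nlinarith
    have hRnn : (0:ℝ) ≤ ∏ p ∈ F.erase 3, ((p : ℝ)) ^ (-(3/2) : ℝ) :=
      Finset.prod_nonneg fun p _ => Real.rpow_nonneg (Nat.cast_nonneg p) _
    have hLnn : (0:ℝ) ≤ ∏ p ∈ F.erase 3, (1 / (((p : ℝ) - 2) * p)) :=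
      Finset.prod_nonneg fun p hp => hfnonneg p (Finset.mem_of_mem_erase hp)
    calc (1 / ((((3:ℕ) : ℝ) - 2) * ((3:ℕ):ℝ))) * ∏ p ∈ F.erase 3, (1 / (((p : ℝ) - 2) * p))
        ≤ (2 * (((3:ℕ):ℝ)) ^ (-(3/2) : ℝ)) * ∏ p ∈ F.erase 3, ((p : ℝ)) ^ (-(3/2) : ℝ) := by
          apply mul_le_mul h13 herase hLnn
          positivity
      _ = 2 * ((((3:ℕ):ℝ)) ^ (-(3/2) : ℝ) * ∏ p ∈ F.erase 3, ((p : ℝ)) ^ (-(3/2) : ℝ)) := by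
          ring
  · have h5 : ∀ p ∈ F, 5 ≤ p := fun p hp => five_le (hF p hp).1
      (fun he => h3 (he ▸ hp)) (by have := (hF p hp).2; omega)
    calc ∏ p ∈ F, (1 / (((p : ℝ) - 2) * p)) ≤ ∏ p ∈ F, ((p : ℝ)) ^ (-(3/2) : ℝ) :=
          Finset.prod_le_prod hfnonneg (fun p hp => ptwise (h5 p hp))
      _ ≤ 2 * ∏ p ∈ F, ((p : ℝ)) ^ (-(3/2) : ℝ) := by
          have : (0:ℝ) ≤ ∏ p ∈ F, ((p : ℝ)) ^ (-(3/2) : ℝ) :=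
            Finset.prod_nonneg fun p _ => Real.rpow_nonneg (Nat.cast_nonneg p) _
          linarith

lemma G_le (d : ℕ) : G d ≤ 2 * (d : ℝ) ^ (-(3/2) : ℝ) := by
  classical
  by_cases h : Squarefree d ∧ Odd d
  · have hd : (d : ℝ) = ∏ p ∈ d.primeFactors, (p : ℝ) := by
      rw [← Nat.cast_prod]
      exact_mod_cast (Nat.prod_primeFactors_of_squarefree h.1).symm
    rw [G_eq_prod h, hd, ← Real.finset_prod_rpow _ _ (fun p _ => Nat.cast_nonneg p) _]
    exact prod_bound d.primeFactors fun p hp =>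
      ⟨Nat.prime_of_mem_primeFactors hp, three_le_of_mem h.2 hp⟩
  · rw [G, w, if_neg h, zero_div]
    positivity

lemma summable_G : Summable G :=
  Summable.of_nonneg_of_le G_nonneg G_le <|
    (Real.summable_nat_rpow.mpr (by norm_num)).mul_left 2

lemma summable_norm_G : Summable fun d => ‖G d‖ := by
  simpa only [Real.norm_eq_abs, abs_of_nonneg (G_nonneg _)] using summable_G

abbrev Oddp := {p : ℕ // p.Prime ∧ 2 < p}

lemma G_two : G 2 = 0 := by
  rw [G, show (2:ℕ) = 2^1 from rfl, w_two_pow le_rfl, zero_div]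

lemma G_prime_pos {p : ℕ} (hp : p.Prime) (h2 : 2 < p) : 0 < G p := by
  rw [G, w_prime hp h2]
  have h3 : (3:ℝ) ≤ (p:ℝ) := by exact_mod_cast h2
  have h1 : (0:ℝ) < (p:ℝ) - 2 := by linarith
  have h0 : (0:ℝ) < (p:ℝ) := by linarith
  positivity

lemma euler : HasProd (fun p : Nat.Primes => 1 + G (p : ℕ)) (∑' n, G n) := by
  have h := EulerProduct.eulerProduct_hasProd (f := G) G_one
    (fun {m n} hc => G_mul hc) summable_norm_G G_zero
  have hfe : (fun p : Nat.Primes => ∑' e : ℕ, G ((p : ℕ) ^ e)) =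
      fun p : Nat.Primes => 1 + G (p : ℕ) := funext fun p => tsum_G_pow p.2
  rwa [hfe] at h

lemma tsum_G_eq : ∑' n, G n = ∏' q : Oddp, (1 + G (q : ℕ)) := by
  rw [← euler.tprod_eq]
  refine tprod_eq_tprod_of_ne_one_bij
    (f := fun p : Nat.Primes => 1 + G (p : ℕ))
    (g := fun q : Oddp => 1 + G (q : ℕ))
    (fun q => ⟨(q : ℕ), q.1.2.1⟩) ?_ ?_ ?_
  · intro a b hab
    have h : ((a : Oddp) : ℕ) = ((b : Oddp) : ℕ) := by
      simpa using congrArg Subtype.val hab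
    exact Subtype.ext (Subtype.ext h)
  · rintro p hp
    have h2 : 2 < (p : ℕ) := by
      rcases lt_or_ge 2 (p : ℕ) with h | h
      · exact h
      · exfalso
        have hp2 : (p : ℕ) = 2 := le_antisymm h p.2.two_le
        apply hp
        simp only [Function.mem_mulSupport] at *
        rw [hp2, G_two, add_zero]
    refine ⟨⟨⟨(p : ℕ), p.2, h2⟩, ?_⟩, ?_⟩
    · simp only [Function.mem_mulSupport]
      have := G_prime_pos p.2 h2
      intro hcon
      nlinarith
    · rfl
  · intro q
    rfl

lemma G_prime_eq {p : ℕ} (hp : p.Prime) (h2 : 2 < p) :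
    G p = 1 / ((p : ℝ) - 2) / (p : ℝ) := by
  rw [G, w_prime hp h2]

lemma key_alg {x : ℝ} (h3 : 3 ≤ x) :
    (1 - 1 / (x - 1) ^ 2) * (1 + 1 / (x - 2) / x) = 1 := by
  have h1 : x - 1 ≠ 0 := by intro h; nlinarith
  have h2 : x - 2 ≠ 0 := by intro h; nlinarith
  have h0 : x ≠ 0 := by intro h; nlinarith
  field_simp
  ring

lemma three_le_oddp (q : Oddp) : (3 : ℝ) ≤ ((q : ℕ) : ℝ) := by
  have := q.2.1.two_le
  have := q.2.2
  exact_mod_cast by omega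

lemma B_pos (q : Oddp) : 0 < 1 + G (q : ℕ) := by
  have := G_nonneg (q : ℕ)
  linarith

lemma summable_log_B : Summable fun q : Oddp => Real.log (1 + G (q : ℕ)) := by
  have hsub : Summable fun q : Oddp => G (q : ℕ) :=
    summable_G.subtype {p : ℕ | p.Prime ∧ 2 < p}
  refine Summable.of_nonneg_of_le (fun q => ?_) (fun q => ?_) hsub
  · exact Real.log_nonneg (by have := G_nonneg (q : ℕ); linarith)
  · have := Real.log_le_sub_one_of_pos (B_pos q)
    linarith

lemma mult_B : Multipliable fun q : Oddp => 1 + G (q : ℕ) :=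
  Real.multipliable_of_summable_log (fun q => B_pos q) summable_log_B

lemma A_eq_inv (q : Oddp) :
    (1 - 1 / (((q : ℕ) : ℝ) - 1) ^ 2) = (1 + G (q : ℕ))⁻¹ := by
  apply eq_inv_of_mul_eq_one_left
  rw [G_prime_eq q.2.1 q.2.2]
  exact key_alg (three_le_oddp q)

lemma A_pos (q : Oddp) : 0 < 1 - 1 / (((q : ℕ) : ℝ) - 1) ^ 2 := by
  rw [A_eq_inv q]
  exact inv_pos.mpr (B_pos q)

lemma summable_log_A : Summable fun q : Oddp => Real.log (1 - 1 / (((q : ℕ) : ℝ) - 1) ^ 2) := by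
  have h : (fun q : Oddp => Real.log (1 - 1 / (((q : ℕ) : ℝ) - 1) ^ 2)) =
      fun q : Oddp => -Real.log (1 + G (q : ℕ)) := by
    funext q
    rw [A_eq_inv q, Real.log_inv]
  rw [h]
  exact summable_log_B.neg

lemma mult_A : Multipliable fun q : Oddp => 1 - 1 / (((q : ℕ) : ℝ) - 1) ^ 2 :=
  Real.multipliable_of_summable_log (fun q => A_pos q) summable_log_A

lemma const_identity : twinPrimeConst * (∑' n, G n) = 1 := by
  rw [tsum_G_eq, twinPrimeConst, ← Multipliable.tprod_mul mult_A mult_B]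
  rw [show (fun q : Oddp => (1 - 1 / (((q : ℕ) : ℝ) - 1) ^ 2) * (1 + G (q : ℕ))) =
      fun _ : Oddp => (1 : ℝ) from funext fun q => by
        rw [G_prime_eq q.2.1 q.2.2]; exact key_alg (three_le_oddp q)]
  exact tprod_one

lemma odd_prod_iff {T : Finset ℕ} (hT : ∀ p ∈ T, p.Prime) :
    Odd (∏ p ∈ T, p) ↔ 2 ∉ T := by
  rw [← Nat.not_even_iff_odd, even_iff_two_dvd]
  constructor
  · intro h h2
    exact h (Finset.dvd_prod_of_mem _ h2)
  · intro h2 hdvd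
    obtain ⟨p, hpT, hp2⟩ := (Nat.prime_two.prime.dvd_finset_prod_iff _).mp hdvd
    have : p = 2 := ((Nat.prime_dvd_prime_iff_eq Nat.prime_two (hT p hpT)).mp hp2).symm
    exact h2 (this ▸ hpT)

lemma sum_divisors_w {r : ℕ} (hr : r ≠ 0) :
    ∑ d ∈ r.divisors, w d =
      ∏ p ∈ r.primeFactors.filter (fun p => 2 < p), (((p : ℝ) - 1) / ((p : ℝ) - 2)) := by
  classical
  have h1 : ∑ d ∈ r.divisors, w d =
      ∑ d ∈ r.divisors.filter Squarefree,
        (if Odd d then ∏ p ∈ d.primeFactors, (1:ℝ)/((p:ℝ)-2) else 0) := by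
    rw [Finset.sum_filter]
    exact Finset.sum_congr rfl fun d _ => by rw [w, ite_and]
  rw [h1, Nat.sum_divisors_filter_squarefree hr]
  have h2 : (UniqueFactorizationMonoid.normalizedFactors r).toFinset = r.primeFactors := by
    rw [Nat.factors_eq]
    simp [Nat.toFinset_factors]
  rw [h2]
  have h3 : ∀ T ∈ r.primeFactors.powerset,
      (if Odd (T.val.prod) then ∏ p ∈ (T.val.prod).primeFactors, (1:ℝ)/((p:ℝ)-2) else 0) =
      (if 2 ∉ T then ∏ p ∈ T, (1:ℝ)/((p:ℝ)-2) else 0) := by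
    intro T hT
    have hTsub := Finset.mem_powerset.mp hT
    have hTprime : ∀ p ∈ T, p.Prime := fun p hp =>
      Nat.prime_of_mem_primeFactors (hTsub hp)
    have hval : T.val.prod = ∏ p ∈ T, p := by
      rw [Finset.prod_val]
      rfl
    rw [hval]
    simp only [odd_prod_iff hTprime]
    by_cases h : 2 ∉ T
    · rw [if_pos h, if_pos h, Nat.primeFactors_prod hTprime]
    · rw [if_neg h, if_neg h]
  rw [Finset.sum_congr rfl h3, ← Finset.sum_filter]
  have h4 : (r.primeFactors.powerset.filter (fun T => 2 ∉ T)) =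
      (r.primeFactors.filter (fun p => 2 < p)).powerset := by
    ext T
    simp only [Finset.mem_filter, Finset.mem_powerset]
    constructor
    · rintro ⟨hsub, h2T⟩ p hp
      have hpP := hsub hp
      refine Finset.mem_filter.mpr ⟨hpP, ?_⟩
      have hprime := Nat.prime_of_mem_primeFactors hpP
      rcases Nat.lt_or_ge 2 p with h | h
      · exact h
      · have : p = 2 := le_antisymm h hprime.two_le
        exact absurd (this ▸ hp) h2T
    · intro hsub
      constructor
      · exact hsub.trans (Finset.filter_subset _ _)
      · intro h2T
        have := Finset.mem_filter.mp (hsub h2T)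
        omega
  rw [h4]
  have h5 : ∀ S : Finset ℕ,
      ∑ T ∈ S.powerset, ∏ p ∈ T, (1:ℝ)/((p:ℝ)-2) =
      ∏ p ∈ S, ((1:ℝ)/((p:ℝ)-2) + 1) := by
    intro S
    rw [Finset.prod_add]
    exact Finset.sum_congr rfl fun T _ => by simp
  rw [h5]
  refine Finset.prod_congr rfl fun p hp => ?_
  have hmem := Finset.mem_filter.mp hp
  have h3p : (3:ℝ) ≤ (p:ℝ) := by
    have := (Nat.prime_of_mem_primeFactors hmem.1).two_le
    have := hmem.2
    exact_mod_cast by omega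
  have hne : (p:ℝ) - 2 ≠ 0 := by intro h; nlinarith
  field_simp
  ring

lemma swap_sum (m : ℕ) :
    ∑ r ∈ Finset.Icc 1 m, (∑ d ∈ r.divisors, w d) =
      ∑ d ∈ Finset.Icc 1 m, w d * ((m / d : ℕ) : ℝ) := by
  classical
  have hIcc : Finset.Icc 1 m = Finset.Ioc 0 m := by
    ext x
    simp only [Finset.mem_Icc, Finset.mem_Ioc]
    omega
  have hdiv : ∀ r ∈ Finset.Icc 1 m, (∑ d ∈ r.divisors, w d) =
      ∑ d ∈ Finset.Icc 1 m, (if d ∣ r then w d else 0) := by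
    intro r hr
    rw [Finset.mem_Icc] at hr
    have : r.divisors = (Finset.Icc 1 m).filter (· ∣ r) := by
      ext d
      simp only [Nat.mem_divisors, Finset.mem_filter, Finset.mem_Icc]
      constructor
      · rintro ⟨hdvd, hne⟩
        have hd1 : 1 ≤ d := Nat.pos_of_dvd_of_pos hdvd (by omega)
        have hdm : d ≤ m := le_trans (Nat.le_of_dvd (by omega) hdvd) hr.2
        exact ⟨⟨hd1, hdm⟩, hdvd⟩
      · rintro ⟨-, hdvd⟩
        exact ⟨hdvd, by omega⟩
    rw [this, Finset.sum_filter]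
  rw [Finset.sum_congr rfl hdiv, Finset.sum_comm]
  refine Finset.sum_congr rfl fun d _ => ?_
  rw [← Finset.sum_filter, Finset.sum_const, nsmul_eq_mul, mul_comm]
  congr 1
  rw [hIcc]
  exact_mod_cast congrArg (Nat.cast : ℕ → ℝ) (Nat.Ioc_filter_dvd_card_eq_div m d)

lemma ratio_le {d m : ℕ} (hd : 0 < d) (hm : 1 ≤ m) :
    ((m / d : ℕ) : ℝ) / (m : ℝ) ≤ 1 / (d : ℝ) := by
  have hm0 : (0:ℝ) < (m:ℝ) := by exact_mod_cast hm
  have hd0 : (0:ℝ) < (d:ℝ) := by exact_mod_cast hd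
  rw [div_le_div_iff₀ hm0 hd0]
  have : (m / d) * d ≤ m := Nat.div_mul_le_self m d
  have hcast : ((m / d : ℕ) : ℝ) * (d : ℝ) ≤ (m : ℝ) := by exact_mod_cast this
  linarith

lemma ratio_tendsto {d : ℕ} (hd : 0 < d) :
    Tendsto (fun m : ℕ => ((m / d : ℕ) : ℝ) / (m : ℝ)) atTop (𝓝 (1 / (d : ℝ))) := by
  have hd0 : (0:ℝ) < (d:ℝ) := by exact_mod_cast hd
  apply tendsto_of_tendsto_of_tendsto_of_le_of_le'
    (g := fun m : ℕ => 1/(d:ℝ) - 1/(m:ℝ)) (h := fun _ : ℕ => 1/(d:ℝ))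
  · have h0 : Tendsto (fun m : ℕ => 1/(m:ℝ)) atTop (𝓝 0) :=
      tendsto_one_div_atTop_nhds_zero_nat
    simpa using tendsto_const_nhds.sub h0
  · exact tendsto_const_nhds
  · filter_upwards [eventually_ge_atTop 1] with m hm
    have hm0 : (0:ℝ) < (m:ℝ) := by exact_mod_cast hm
    have hlt : m < d * (m / d) + d := by
      have h1 := Nat.div_add_mod m d
      have h2 := Nat.mod_lt m hd
      omega
    have hltR : (m:ℝ) < (d:ℝ) * ((m / d : ℕ) : ℝ) + (d:ℝ) := by exact_mod_cast hlt
    have hq0 : (0:ℝ) ≤ ((m / d : ℕ) : ℝ) := Nat.cast_nonneg _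
    rw [div_sub_div _ _ hd0.ne' hm0.ne', div_le_div_iff₀ (by positivity) hm0]
    nlinarith
  · filter_upwards [eventually_ge_atTop 1] with m hm
    exact ratio_le hd hm

lemma tendsto_main :
    Tendsto (fun m : ℕ => ∑' d : ℕ, (w d * ((m / d : ℕ) : ℝ) / (m : ℝ))) atTop
      (𝓝 (∑' d : ℕ, G d)) := by
  apply tendsto_tsum_of_dominated_convergence (bound := G) summable_G
  · intro d
    rcases Nat.eq_zero_or_pos d with rfl | hd
    · simpa [w_zero, G_zero] using tendsto_const_nhds
    · have h := (ratio_tendsto hd).const_mul (w d)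
      have heq : (fun m : ℕ => w d * (((m / d : ℕ) : ℝ) / (m : ℝ))) =
          fun m : ℕ => w d * ((m / d : ℕ) : ℝ) / (m : ℝ) := by
        funext m
        rw [mul_div_assoc]
      rw [heq] at h
      have : w d * (1 / (d:ℝ)) = G d := by rw [mul_one_div, G]
      rwa [this] at h
  · filter_upwards [eventually_ge_atTop 1] with m hm
    intro d
    rcases Nat.eq_zero_or_pos d with rfl | hd
    · simp [w_zero, G_zero]
    · have hm0 : (0:ℝ) < (m:ℝ) := by exact_mod_cast hm
      have hnn : 0 ≤ w d * ((m / d : ℕ) : ℝ) / (m : ℝ) := by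
        have := w_nonneg d
        positivity
      rw [Real.norm_eq_abs, abs_of_nonneg hnn, mul_div_assoc, G]
      have := ratio_le hd hm
      have hw := w_nonneg d
      calc w d * (((m / d : ℕ) : ℝ) / (m : ℝ)) ≤ w d * (1 / (d:ℝ)) :=
            mul_le_mul_of_nonneg_left this hw
        _ = w d / d := by rw [mul_one_div]

end HLaux

open HLaux

/-- The Hardy–Littlewood prime-pair constants have mean value one:
`(1/m) ∑_{r=1}^m C_{2r} → 1` as `m → ∞`. -/
theorem HLconst_mean_value_one :
    Tendsto (fun m : ℕ => (∑ r ∈ Finset.Icc 1 m, HLconst r) / (m : ℝ)) atTop (𝓝 1) := by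
  classical
  have hEq : (fun m : ℕ => (∑ r ∈ Finset.Icc 1 m, HLconst r) / (m : ℝ)) =ᶠ[atTop]
      fun m : ℕ => twinPrimeConst * ∑' d : ℕ, (w d * ((m / d : ℕ) : ℝ) / (m : ℝ)) := by
    filter_upwards [eventually_ge_atTop 1] with m hm
    have h1 : ∑ r ∈ Finset.Icc 1 m, HLconst r =
        twinPrimeConst * ∑ r ∈ Finset.Icc 1 m, (∑ d ∈ r.divisors, w d) := by
      rw [Finset.mul_sum]
      refine Finset.sum_congr rfl fun r hr => ?_
      rw [Finset.mem_Icc] at hr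
      rw [HLconst, sum_divisors_w (by omega : r ≠ 0)]
    have h2 : ∑' d : ℕ, (w d * ((m / d : ℕ) : ℝ) / (m : ℝ)) =
        ∑ d ∈ Finset.Icc 1 m, (w d * ((m / d : ℕ) : ℝ) / (m : ℝ)) := by
      apply tsum_eq_sum
      intro d hd
      rw [Finset.mem_Icc] at hd
      rcases Nat.eq_zero_or_pos d with rfl | hd0
      · simp [w_zero]
      · have hdm : m < d := by omega
        rw [Nat.div_eq_of_lt hdm]
        simp
    rw [h1, swap_sum m, h2, mul_div_assoc, Finset.sum_div, Finset.mul_sum]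
  rw [Filter.tendsto_congr' hEq]
  have h := tendsto_main.const_mul twinPrimeConst
  rwa [const_identity] at h
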